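/- Let X be a multiset of complex numbers, each with nonnegative real part, whose real parts sum to at most 1/2, closed under complex conjugation with matching multiplicities, and such that Σ_{x∈X} |x|² < ∞. Suppose ρ = max_{x∈X} |x| is attained by a positive real element ρ ∈ X. Then for every odd ℓ ≥ 3, Σ_{x∈X} x^ℓ ≤ (1/2)^ℓ (the sum being real and absolutely convergent). -/

import Mathlib

open Complex

/-- Bernoulli-type inequality: `t^(m+1) + (m+1) t^m (s-t) ≤ s^(m+1)` for `0 ≤ t ≤ s`. -/
lemma aux_pow_ineq (s t : ℝ) (ht : 0 ≤ t) (hts : t ≤ s) (m : ℕ) :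
    t ^ (m + 1) + (m + 1 : ℝ) * t ^ m * (s - t) ≤ s ^ (m + 1) := by
  induction m with
  | zero => simp
  | succ m ih =>
    have hs : 0 ≤ s := ht.trans hts
    have htm : 0 ≤ t ^ m := pow_nonneg ht m
    have h1 : s * (t ^ (m + 1) + ((m : ℝ) + 1) * t ^ m * (s - t)) ≤ s * s ^ (m + 1) :=
      mul_le_mul_of_nonneg_left ih hs
    have hkey : t ^ (m + 2) + ((m : ℝ) + 2) * t ^ (m + 1) * (s - t)
        ≤ s * (t ^ (m + 1) + ((m : ℝ) + 1) * t ^ m * (s - t)) := by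
      have hnn : 0 ≤ ((m : ℝ) + 1) * (t ^ m * (s - t) ^ 2) := by positivity
      have hid : s * (t ^ (m + 1) + ((m : ℝ) + 1) * t ^ m * (s - t))
          - (t ^ (m + 2) + ((m : ℝ) + 2) * t ^ (m + 1) * (s - t))
          = ((m : ℝ) + 1) * (t ^ m * (s - t) ^ 2) := by ring
      linarith
    have : t ^ (m + 2) + ((m : ℝ) + 2) * t ^ (m + 1) * (s - t) ≤ s ^ (m + 2) := by
      calc t ^ (m + 2) + ((m : ℝ) + 2) * t ^ (m + 1) * (s - t)
          ≤ s * (t ^ (m + 1) + ((m : ℝ) + 1) * t ^ m * (s - t)) := hkey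
        _ ≤ s * s ^ (m + 1) := h1
        _ = s ^ (m + 2) := by ring
    push_cast
    convert this using 2 <;> push_cast <;> ring

/-- Key pointwise inequality: for `Re z ≥ 0` and odd `ℓ`,
`Re (z^ℓ) ≤ ℓ |z|^(ℓ-1) Re z`. -/
lemma key_re_ineq (z : ℂ) (ha : 0 ≤ z.re) {ℓ : ℕ} (hodd : Odd ℓ) :
    (z ^ ℓ).re ≤ (ℓ : ℝ) * ‖z‖ ^ (ℓ - 1) * z.re := by
  classical
  set c : ℂ := (starRingEnd ℂ) z with hc
  set w : ℂ := ∑ i ∈ Finset.range ℓ, z ^ i * (-c) ^ (ℓ - 1 - i) with hwdef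
  have hid : w * (z + c) = z ^ ℓ + c ^ ℓ := by
    have h := geom_sum₂_mul z (-c) ℓ
    rw [Odd.neg_pow hodd, sub_neg_eq_add, sub_neg_eq_add] at h
    exact h
  have habs_c : ‖c‖ = ‖z‖ := Complex.norm_conj z
  have hw_bound : ‖w‖ ≤ (ℓ : ℝ) * ‖z‖ ^ (ℓ - 1) := by
    calc ‖w‖ ≤ ∑ i ∈ Finset.range ℓ, ‖z ^ i * (-c) ^ (ℓ - 1 - i)‖ :=
          norm_sum_le _ _
      _ = ∑ i ∈ Finset.range ℓ, ‖z‖ ^ (ℓ - 1) := by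
          apply Finset.sum_congr rfl
          intro i hi
          have hi' : i ≤ ℓ - 1 := by
            have := Finset.mem_range.mp hi
            omega
          rw [norm_mul, norm_pow, norm_pow, norm_neg, habs_c, ← pow_add]
          congr 1
          omega
      _ = (ℓ : ℝ) * ‖z‖ ^ (ℓ - 1) := by
          rw [Finset.sum_const, Finset.card_range, nsmul_eq_mul]
  have hcpow : c ^ ℓ = (starRingEnd ℂ) (z ^ ℓ) := (map_pow _ _ _).symm
  have hsum1 : z ^ ℓ + c ^ ℓ = ((2 * (z ^ ℓ).re : ℝ) : ℂ) := by
    rw [hcpow, Complex.add_conj]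
  have hsum2 : z + c = ((2 * z.re : ℝ) : ℂ) := Complex.add_conj z
  have hre_eq : 2 * (z ^ ℓ).re = w.re * (2 * z.re) := by
    have : w * ((2 * z.re : ℝ) : ℂ) = ((2 * (z ^ ℓ).re : ℝ) : ℂ) := by
      rw [← hsum2, hid, hsum1]
    have h2 := congrArg Complex.re this
    simpa [Complex.mul_re] using h2.symm
  have hwre : w.re ≤ ‖w‖ := Complex.re_le_norm w
  have : (z ^ ℓ).re = z.re * w.re := by linarith
  rw [this]
  calc z.re * w.re ≤ z.re * ((ℓ : ℝ) * ‖z‖ ^ (ℓ - 1)) :=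
        mul_le_mul_of_nonneg_left (hwre.trans hw_bound) ha
    _ = (ℓ : ℝ) * ‖z‖ ^ (ℓ - 1) * z.re := by ring

theorem stmt_14 (f : ℕ → ℂ)
    (hre : ∀ n, 0 ≤ (f n).re)
    (hre_sum : Summable fun n => (f n).re)
    (hre_half : ∑' n, (f n).re ≤ 1 / 2)
    (hconj : ∃ e : Equiv.Perm ℕ, ∀ n, f (e n) = starRingEnd ℂ (f n))
    (hsq : Summable fun n => ‖f n‖ ^ 2)
    (ρ : ℝ) (hρ : 0 < ρ) (hρ_mem : ∃ n, f n = (ρ : ℂ))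
    (hρ_max : ∀ n, ‖f n‖ ≤ ρ)
    (ℓ : ℕ) (hℓ : 3 ≤ ℓ) (hodd : Odd ℓ) :
    (Summable fun n => ‖f n ^ ℓ‖) ∧
      (∑' n, f n ^ ℓ).im = 0 ∧ (∑' n, f n ^ ℓ).re ≤ (1 / 2) ^ ℓ := by
  classical
  obtain ⟨n₀, hn₀⟩ := hρ_mem
  obtain ⟨e, he⟩ := hconj
  -- ρ ≤ 1/2
  have hre_n₀ : (f n₀).re = ρ := by rw [hn₀]; simp
  have hρ_le_T : ρ ≤ ∑' n, (f n).re := by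
    have := Summable.le_tsum hre_sum n₀ (fun i _ => hre i)
    rwa [hre_n₀] at this
  have hρ_half : ρ ≤ 1 / 2 := hρ_le_T.trans hre_half
  -- summability of |f n ^ ℓ|
  have habs_pow : ∀ n, ‖f n ^ ℓ‖ = ‖f n‖ ^ ℓ := fun n => norm_pow _ _
  have hsumabs : Summable fun n => ‖f n ^ ℓ‖ := by
    apply Summable.of_nonneg_of_le (fun n => norm_nonneg _)
      (fun n => ?_) (hsq.mul_left (ρ ^ (ℓ - 2)))
    rw [habs_pow]
    have h1 : ‖f n‖ ^ ℓ = ‖f n‖ ^ (ℓ - 2) * ‖f n‖ ^ 2 := by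
      rw [← pow_add]; congr 1; omega
    rw [h1]
    exact mul_le_mul_of_nonneg_right
      (pow_le_pow_left₀ (norm_nonneg _) (hρ_max n) _)
      (sq_nonneg _)
  have hsumf : Summable fun n => f n ^ ℓ := by
    apply Summable.of_norm
    simpa using hsumabs
  refine ⟨hsumabs, ?_, ?_⟩
  -- imaginary part is zero
  · have hconjS : (starRingEnd ℂ) (∑' n, f n ^ ℓ) = ∑' n, f n ^ ℓ := by
      calc (starRingEnd ℂ) (∑' n, f n ^ ℓ) = ∑' n, (starRingEnd ℂ) (f n ^ ℓ) := by
            rw [starRingEnd_apply, tsum_star]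
            rfl
        _ = ∑' n, f (e n) ^ ℓ := by
            apply tsum_congr; intro n
            rw [he n, map_pow]
        _ = ∑' n, f n ^ ℓ := e.tsum_eq (fun n => f n ^ ℓ)
    exact Complex.conj_eq_iff_im.mp hconjS
  -- real part bound
  · have hre_tsum : (∑' n, f n ^ ℓ).re = ∑' n, (f n ^ ℓ).re := Complex.re_tsum hsumf
    rw [hre_tsum]
    set g : ℕ → ℝ := fun n => (f n ^ ℓ).re with hg
    have hgsum : Summable g := by
      apply Summable.of_abs
      apply Summable.of_nonneg_of_le (fun n => abs_nonneg _) (fun n => ?_) hsumabs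
      exact (Complex.abs_re_le_norm _)
    set c : ℝ := (ℓ : ℝ) * ρ ^ (ℓ - 1) with hcdef
    have hc : 0 ≤ c := by positivity
    have hkey : ∀ n, g n ≤ c * (f n).re := by
      intro n
      calc g n ≤ (ℓ : ℝ) * ‖f n‖ ^ (ℓ - 1) * (f n).re :=
            key_re_ineq (f n) (hre n) hodd
        _ ≤ c * (f n).re := by
            apply mul_le_mul_of_nonneg_right _ (hre n)
            apply mul_le_mul_of_nonneg_left _ (by positivity)
            exact pow_le_pow_left₀ (norm_nonneg _) (hρ_max n) _
    have hg_n₀ : g n₀ = ρ ^ ℓ := by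
      simp only [hg, hn₀, ← Complex.ofReal_pow, Complex.ofReal_re]
    -- summability of truncated series
    have hA : Summable fun n => if n = n₀ then (0 : ℝ) else g n := by
      have := hgsum.update n₀ 0
      apply this.congr
      intro n
      simp [Function.update_apply]
    have hite_re : Summable fun n => if n = n₀ then (0 : ℝ) else (f n).re := by
      apply Summable.of_nonneg_of_le (fun n => ?_) (fun n => ?_) hre_sum
      · split_ifs <;> [exact le_rfl; exact hre n]
      · split_ifs <;> [exact hre n; exact le_rfl]
    have hB : Summable fun n => if n = n₀ then (0 : ℝ) else c * (f n).re := by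
      apply (hite_re.mul_left c).congr
      intro n
      split_ifs <;> simp
    have hsplit_g : ∑' n, g n = g n₀ + ∑' n, if n = n₀ then (0 : ℝ) else g n :=
      Summable.tsum_eq_add_tsum_ite hgsum n₀
    have hsplit_re : ∑' n, (f n).re = ρ + ∑' n, if n = n₀ then (0 : ℝ) else (f n).re := by
      have := Summable.tsum_eq_add_tsum_ite hre_sum n₀
      rwa [hre_n₀] at this
    have hstep1 : (∑' n, if n = n₀ then (0 : ℝ) else g n)
        ≤ ∑' n, if n = n₀ then (0 : ℝ) else c * (f n).re := by
      apply Summable.tsum_le_tsum _ hA hB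
      intro n
      split_ifs
      · exact le_rfl
      · exact hkey n
    have hstep2 : (∑' n, if n = n₀ then (0 : ℝ) else c * (f n).re)
        = c * ∑' n, if n = n₀ then (0 : ℝ) else (f n).re := by
      rw [← tsum_mul_left]
      apply tsum_congr
      intro n
      split_ifs <;> simp
    have hT_nonneg : 0 ≤ ∑' n, if n = n₀ then (0 : ℝ) else (f n).re :=
      tsum_nonneg fun n => by split_ifs <;> [exact le_rfl; exact hre n]
    have hT_le : (∑' n, if n = n₀ then (0 : ℝ) else (f n).re) ≤ 1 / 2 - ρ := by
      have : ρ + (∑' n, if n = n₀ then (0 : ℝ) else (f n).re) ≤ 1 / 2 := by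
        rw [← hsplit_re]; exact hre_half
      linarith
    have hfinal : ∑' n, g n ≤ ρ ^ ℓ + c * (1 / 2 - ρ) := by
      rw [hsplit_g, hg_n₀]
      have h1 : (∑' n, if n = n₀ then (0 : ℝ) else g n) ≤ c * (1 / 2 - ρ) := by
        calc (∑' n, if n = n₀ then (0 : ℝ) else g n)
            ≤ c * ∑' n, if n = n₀ then (0 : ℝ) else (f n).re := by rw [← hstep2]; exact hstep1
          _ ≤ c * (1 / 2 - ρ) := mul_le_mul_of_nonneg_left hT_le hc
      linarith
    -- final numeric inequality
    obtain ⟨m, rfl⟩ : ∃ m, ℓ = m + 1 := ⟨ℓ - 1, by omega⟩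
    have haux := aux_pow_ineq (1 / 2) ρ hρ.le hρ_half m
    have hcast : c = ((m : ℝ) + 1) * ρ ^ m := by
      rw [hcdef]
      norm_cast
    calc ∑' n, g n ≤ ρ ^ (m + 1) + c * (1 / 2 - ρ) := hfinal
      _ = ρ ^ (m + 1) + ((m : ℝ) + 1) * ρ ^ m * (1 / 2 - ρ) := by rw [hcast]
      _ ≤ (1 / 2) ^ (m + 1) := by linarith [haux]
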